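/- Let 0 ≠ M ∈ ⋀X. Then M is a blade (i.e. M is a scalar or an exterior product v₁∧⋯∧v_p of vectors) if and only if isp M = osp M. -/

import Mathlib

open scoped RealInnerProductSpace

/-- The blade `v₁ ∧ ⋯ ∧ v_k` in the exterior algebra. -/
noncomputable def expBlade {X : Type*} [AddCommGroup X] [Module ℝ X] {k : ℕ}
    (v : Fin k → X) : ExteriorAlgebra ℝ X :=
  (List.ofFn fun i => ExteriorAlgebra.ι ℝ (v i)).prod

/-- A blade: a scalar, or an exterior product of vectors. -/
def IsBlade {X : Type*} [AddCommGroup X] [Module ℝ X] (B : ExteriorAlgebra ℝ X) : Prop :=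
  (∃ r : ℝ, B = algebraMap ℝ (ExteriorAlgebra ℝ X) r) ∨
    ∃ (k : ℕ) (v : Fin k → X), B = (List.ofFn fun i => ExteriorAlgebra.ι ℝ (v i)).prod

/-- The inner space of a multivector `M`: the subspace `{v ∈ X : v ∧ M = 0}`. -/
noncomputable def innerSpace {X : Type*} [AddCommGroup X] [Module ℝ X]
    (M : ExteriorAlgebra ℝ X) : Submodule ℝ X :=
  LinearMap.ker ((LinearMap.mulRight ℝ M).comp (ExteriorAlgebra.ι ℝ))

/-- The outer space of a multivector `M`: the intersection of all subspaces `V ⊆ X` such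
that `M` lies in the subalgebra of the exterior algebra generated by `V`. -/
noncomputable def outerSpace {X : Type*} [AddCommGroup X] [Module ℝ X]
    (M : ExteriorAlgebra ℝ X) : Submodule ℝ X :=
  sInf {V : Submodule ℝ X |
    M ∈ Algebra.adjoin ℝ (⇑(ExteriorAlgebra.ι ℝ (M := X)) '' (V : Set X))}

set_option linter.unusedSectionVars false

open ExteriorAlgebra
namespace Stmt17Aux
open ExteriorAlgebra

variable {X : Type*} [AddCommGroup X] [Module ℝ X]

section Coord
variable {n : ℕ} (b : Module.Basis (Fin n) ℝ X)

/-- product of `ι` over a list of indices -/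
noncomputable def eL (l : List (Fin n)) : ExteriorAlgebra ℝ X :=
  (l.map fun i => ι ℝ (b i)).prod

lemma eL_nil : eL b ([] : List (Fin n)) = 1 := rfl

lemma eL_cons (i : Fin n) (l : List (Fin n)) :
    eL b (i :: l) = ι ℝ (b i) * eL b l := by simp [eL]

lemma eL_append (l l' : List (Fin n)) : eL b (l ++ l') = eL b l * eL b l' := by
  simp [eL]

/-- blade indexed by a finset -/
noncomputable def eB (T : Finset (Fin n)) : ExteriorAlgebra ℝ X :=
  eL b (T.sort (· ≤ ·))

lemma eB_empty : eB b (∅ : Finset (Fin n)) = 1 := by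
  simp [eB, eL]

lemma eB_singleton (i : Fin n) : eB b {i} = ι ℝ (b i) := by
  simp [eB, eL]

lemma sort_insert_eq {i : Fin n} {T : Finset (Fin n)} (h : i ∉ T) :
    (insert i T).sort (· ≤ ·) = (T.sort (· ≤ ·)).orderedInsert (· ≤ ·) i := by
  refine (fun h1 h2 h3 => List.Perm.eq_of_pairwise' (r := (· ≤ ·)) h2 h3 h1) ?_ ?_ ?_
  · apply Multiset.coe_eq_coe.mp
    rw [Finset.sort_eq, Finset.insert_val_of_notMem h]
    have h2 : ((T.sort (· ≤ ·)).orderedInsert (· ≤ ·) i : Multiset (Fin n))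
        = ((i :: T.sort (· ≤ ·) : List (Fin n)) : Multiset (Fin n)) :=
      Multiset.coe_eq_coe.mpr (List.perm_orderedInsert _ _ _)
    rw [h2, ← Multiset.cons_coe, Finset.sort_eq]
  · exact Finset.pairwise_sort _ _
  · exact (Finset.pairwise_sort T _).orderedInsert _ _

lemma sort_erase_eq (j : Fin n) (T : Finset (Fin n)) :
    (T.erase j).sort (· ≤ ·) = (T.sort (· ≤ ·)).erase j := by
  refine (fun h1 h2 h3 => List.Perm.eq_of_pairwise' (r := (· ≤ ·)) h2 h3 h1) ?_ ?_ ?_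
  · apply Multiset.coe_eq_coe.mp
    rw [Finset.sort_eq, Finset.erase_val, ← Multiset.coe_erase, Finset.sort_eq]
  · exact Finset.pairwise_sort _ _
  · exact List.Pairwise.sublist List.erase_sublist (Finset.pairwise_sort T _)

lemma ι_mul_ι_swap (x y : X) : ι ℝ x * ι ℝ y = -(ι ℝ y * ι ℝ x) :=
  eq_neg_of_add_eq_zero_left (ι_add_mul_swap x y)

lemma ι_mul_eL_of_mem : ∀ l : List (Fin n), ∀ i ∈ l, ι ℝ (b i) * eL b l = 0 := by
  intro l
  induction l with
  | nil => simp
  | cons a l ih =>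
    intro i hi
    rw [eL_cons, ← mul_assoc]
    rcases List.mem_cons.mp hi with h | h
    · subst h; rw [ι_sq_zero, zero_mul]
    · rw [ι_mul_ι_swap, neg_mul, mul_assoc, ih i h, mul_zero, neg_zero]

lemma ι_mul_eL_orderedInsert :
    ∀ l : List (Fin n), l.Pairwise (· ≤ ·) → ∀ i ∉ l,
      ∃ ε : ℝ, ε ≠ 0 ∧ ι ℝ (b i) * eL b l = ε • eL b (l.orderedInsert (· ≤ ·) i) := by
  intro l
  induction l with
  | nil => exact fun _ i _ => ⟨1, one_ne_zero, by simp [eL]⟩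
  | cons a l ih =>
    intro hs i hi
    have hia : i ∉ l := fun h => hi (List.mem_cons_of_mem _ h)
    by_cases hle : i ≤ a
    · exact ⟨1, one_ne_zero, by rw [List.orderedInsert, if_pos hle, one_smul, eL_cons, eL_cons]; rw [eL_cons]⟩
    · obtain ⟨ε, hε, hmul⟩ := ih hs.of_cons i hia
      refine ⟨-ε, neg_ne_zero.mpr hε, ?_⟩
      rw [List.orderedInsert, if_neg hle, eL_cons, ← mul_assoc, ι_mul_ι_swap, neg_mul,
        mul_assoc, hmul, eL_cons, mul_smul_comm, neg_smul]

lemma ι_mul_eB_of_mem {i : Fin n} {T : Finset (Fin n)} (h : i ∈ T) :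
    ι ℝ (b i) * eB b T = 0 :=
  ι_mul_eL_of_mem b _ i ((Finset.mem_sort _).mpr h)

lemma ι_mul_eB {i : Fin n} {T : Finset (Fin n)} (h : i ∉ T) :
    ∃ ε : ℝ, ε ≠ 0 ∧ ι ℝ (b i) * eB b T = ε • eB b (insert i T) := by
  obtain ⟨ε, hε, h2⟩ := ι_mul_eL_orderedInsert b _ (Finset.pairwise_sort _ _) i
    (fun hc => h ((Finset.mem_sort _).mp hc))
  exact ⟨ε, hε, by rw [eB, h2, eB, sort_insert_eq h]⟩


/-- the index in `T` at sorted position `i` -/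
noncomputable def sIdx (T : Finset (Fin n)) (i : Fin T.card) : Fin n :=
  (T.sort (· ≤ ·)).get (Fin.cast (Finset.length_sort (· ≤ ·)).symm i)

lemma sIdx_mem (T : Finset (Fin n)) (i : Fin T.card) : sIdx T i ∈ T :=
  (Finset.mem_sort _).mp (List.get_mem _ _)

lemma sIdx_injective (T : Finset (Fin n)) : Function.Injective (sIdx (n := n) T) := by
  intro i j hij
  have h := (List.nodup_iff_injective_get).mp (Finset.sort_nodup T (· ≤ ·)) hij
  exact Fin.cast_injective _ h

lemma sIdx_surj (T : Finset (Fin n)) {t : Fin n} (ht : t ∈ T) : ∃ i, sIdx T i = t := by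
  obtain ⟨j, hj⟩ := List.mem_iff_get.mp ((Finset.mem_sort (· ≤ ·)).mpr ht)
  exact ⟨Fin.cast (Finset.length_sort (· ≤ ·)) j, by simpa [sIdx] using hj⟩

/-- the coordinate functional dual to the blade `eB T` -/
noncomputable def lam (T : Finset (Fin n)) : ExteriorAlgebra ℝ X →ₗ[ℝ] ℝ :=
  liftAlternating fun k =>
    if h : k = T.card then
      (Matrix.detRowAlternating.compLinearMap
        (LinearMap.pi fun i : Fin T.card => b.coord (sIdx T i))).domDomCongr
        (finCongr h.symm)
    else 0

lemma eL_eq_ιMulti (l : List (Fin n)) (k : ℕ) (h : l.length = k) :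
    eL b l = ιMulti ℝ k fun i => b (l.get (Fin.cast h.symm i)) := by
  rw [ιMulti_apply]
  subst h
  show (l.map fun i => ι ℝ (b i)).prod = _
  conv_lhs => rw [← List.ofFn_get l, List.map_ofFn]
  rfl

lemma eB_eq_ιMulti (T : Finset (Fin n)) :
    eB b T = ιMulti ℝ T.card fun i => b (sIdx T i) := by
  rw [eB, eL_eq_ιMulti b _ T.card (Finset.length_sort _)]
  rfl

lemma coord_apply_basis (i j : Fin n) : b.coord i (b j) = if j = i then 1 else 0 := by
  rw [Module.Basis.coord_apply, Module.Basis.repr_self, Finsupp.single_apply]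

lemma lam_eB (T S : Finset (Fin n)) : lam b T (eB b S) = if S = T then 1 else 0 := by
  rw [eB_eq_ιMulti, lam, liftAlternating_apply_ιMulti]
  by_cases h : S.card = T.card
  · rw [dif_pos h, AlternatingMap.domDomCongr_apply, AlternatingMap.compLinearMap_apply]
    have hm : (fun i => (LinearMap.pi fun i : Fin T.card => b.coord (sIdx T i))
          (((fun i => b (sIdx S i)) ∘ ⇑(finCongr h.symm)) i)) =
        fun i j => if sIdx S (finCongr h.symm i) = sIdx T j then (1:ℝ) else 0 := by
      funext i j
      simp only [Function.comp_apply, LinearMap.pi_apply, coord_apply_basis]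
    rw [hm]
    by_cases hST : S = T
    · subst hST
      rw [if_pos rfl]
      have hid : ∀ i : Fin S.card, (finCongr h.symm) i = i := fun i => Fin.ext rfl
      have hone : (fun i j => if sIdx S (finCongr h.symm i) = sIdx S j then (1:ℝ) else 0) =
          (1 : Matrix (Fin S.card) (Fin S.card) ℝ) := by
        funext i j
        rw [hid, Matrix.one_apply]
        by_cases hij : i = j
        · simp [hij]
        · rw [if_neg hij, if_neg fun e => hij (sIdx_injective S e)]
      rw [hone]
      show Matrix.det (1 : Matrix (Fin S.card) (Fin S.card) ℝ) = 1
      exact Matrix.det_one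
    · rw [if_neg hST]
      have hTS : ∃ t ∈ T, t ∉ S := by
        by_contra hc
        push_neg at hc
        exact hST (Finset.eq_of_subset_of_card_le (fun x hx => hc x hx) (le_of_eq h)).symm
      obtain ⟨t, htT, htS⟩ := hTS
      obtain ⟨j0, hj0⟩ := sIdx_surj T htT
      show Matrix.det (Matrix.of fun i j => if sIdx S (finCongr h.symm i) = sIdx T j
        then (1:ℝ) else 0) = 0
      apply Matrix.det_eq_zero_of_column_eq_zero j0
      intro i
      simp only [Matrix.of_apply]
      rw [hj0, if_neg]
      intro e
      exact htS (e ▸ sIdx_mem S _)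
  · rw [dif_neg h, AlternatingMap.zero_apply, if_neg (fun e => h (by rw [e]))]

section Span
variable (s : Set (Fin n))

/-- span of blades with indices inside `s` -/
noncomputable def P : Submodule ℝ (ExteriorAlgebra ℝ X) :=
  Submodule.span ℝ (eB b '' {T : Finset (Fin n) | ↑T ⊆ s})

lemma eB_mem_P {T : Finset (Fin n)} (hT : ↑T ⊆ s) : eB b T ∈ P b s :=
  Submodule.subset_span ⟨T, hT, rfl⟩

lemma ι_mul_mem_P {i : Fin n} (hi : i ∈ s) {x : ExteriorAlgebra ℝ X} (hx : x ∈ P b s) :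
    ι ℝ (b i) * x ∈ P b s := by
  refine Submodule.span_induction ?_ ?_ ?_ ?_ hx
  · rintro _ ⟨T, hT, rfl⟩
    by_cases hiT : i ∈ T
    · rw [ι_mul_eB_of_mem b hiT]; exact Submodule.zero_mem _
    · obtain ⟨ε, _, hmul⟩ := ι_mul_eB b hiT
      rw [hmul]
      exact Submodule.smul_mem _ _ (eB_mem_P b s (by
        rw [Finset.coe_insert]
        exact Set.insert_subset hi hT))
  · rw [mul_zero]; exact Submodule.zero_mem _
  · intro x y _ _ hx hy
    rw [mul_add]; exact Submodule.add_mem _ hx hy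
  · intro a x _ hx
    rw [mul_smul_comm]; exact Submodule.smul_mem _ _ hx

lemma eL_mem_P : ∀ l : List (Fin n), (∀ i ∈ l, i ∈ s) → eL b l ∈ P b s := by
  intro l
  induction l with
  | nil =>
    intro _
    rw [eL_nil, ← eB_empty b]
    exact eB_mem_P b s (by simp)
  | cons a l ih =>
    intro h
    rw [eL_cons]
    exact ι_mul_mem_P b s (h a List.mem_cons_self) (ih fun i hi => h i (List.mem_cons_of_mem _ hi))

lemma P_mul {x y : ExteriorAlgebra ℝ X} (hx : x ∈ P b s) (hy : y ∈ P b s) :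
    x * y ∈ P b s := by
  refine Submodule.span_induction ?_ ?_ ?_ ?_ hx
  · rintro _ ⟨T, hT, rfl⟩
    refine Submodule.span_induction ?_ ?_ ?_ ?_ hy
    · rintro _ ⟨T', hT', rfl⟩
      rw [eB, eB, ← eL_append]
      refine eL_mem_P b s _ fun i hi => ?_
      rcases List.mem_append.mp hi with h | h
      · exact hT ((Finset.mem_sort _).mp h)
      · exact hT' ((Finset.mem_sort _).mp h)
    · rw [mul_zero]; exact Submodule.zero_mem _
    · intro u v _ _ hu hv; rw [mul_add]; exact Submodule.add_mem _ hu hv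
    · intro a u _ hu; rw [mul_smul_comm]; exact Submodule.smul_mem _ _ hu
  · rw [zero_mul]; exact Submodule.zero_mem _
  · intro u v _ _ hu hv; rw [add_mul]; exact Submodule.add_mem _ hu hv
  · intro a u _ hu; rw [smul_mul_assoc]; exact Submodule.smul_mem _ _ hu

lemma P_univ_eq_top : P b (Set.univ : Set (Fin n)) = ⊤ := by
  have h : ∀ M : ExteriorAlgebra ℝ X, M ∈ P b (Set.univ : Set (Fin n)) := by
   intro M
   induction M using ExteriorAlgebra.induction with
   | algebraMap r =>
     rw [Algebra.algebraMap_eq_smul_one, ← eB_empty b]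
     exact Submodule.smul_mem _ _ (eB_mem_P b _ (by simp))
   | ι x =>
     rw [← b.sum_repr x, map_sum]
     refine Submodule.sum_mem _ fun i _ => ?_
     rw [map_smul, ← eB_singleton b i]
     exact Submodule.smul_mem _ _ (eB_mem_P b _ (by simp))
   | mul a c ha hc => exact P_mul b _ ha hc
   | add a c ha hc => exact Submodule.add_mem _ ha hc
  rw [eq_top_iff]
  exact fun M _ => h M

lemma expand (M : ExteriorAlgebra ℝ X) :
    M = ∑ T : Finset (Fin n), lam b T M • eB b T := by
  have key : ∀ M ∈ P b (Set.univ : Set (Fin n)),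
      M = ∑ T : Finset (Fin n), lam b T M • eB b T := by
    intro M hM
    refine Submodule.span_induction ?_ ?_ ?_ ?_ hM
    · rintro _ ⟨S, _, rfl⟩
      rw [Finset.sum_congr rfl fun T _ => by rw [lam_eB b T S, ite_smul, one_smul, zero_smul]]
      rw [Finset.sum_ite_eq _ S (fun T => eB b T)]
      simp
    · simp
    · intro x y _ _ hx hy
      conv_lhs => rw [hx, hy]
      rw [← Finset.sum_add_distrib]
      refine Finset.sum_congr rfl fun T _ => ?_
      rw [map_add, add_smul]
    · intro a x _ hx
      conv_lhs => rw [hx]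
      rw [Finset.smul_sum]
      refine Finset.sum_congr rfl fun T _ => ?_
      rw [map_smul, smul_eq_mul, mul_smul]
  exact key M (by rw [P_univ_eq_top]; trivial)

lemma lam_sum (c : Finset (Fin n) → ℝ) (T' : Finset (Fin n)) :
    lam b T' (∑ T : Finset (Fin n), c T • eB b T) = c T' := by
  rw [map_sum]
  rw [Finset.sum_congr rfl fun T _ => by
    rw [map_smul, lam_eB b T' T, smul_eq_mul, mul_ite, mul_one, mul_zero]]
  rw [Finset.sum_ite_eq' _ T' c]
  simp

lemma mem_P_iff_lam (M : ExteriorAlgebra ℝ X) :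
    M ∈ P b s ↔ ∀ T : Finset (Fin n), ¬(↑T ⊆ s) → lam b T M = 0 := by
  constructor
  · intro hM T hT
    refine Submodule.span_induction ?_ ?_ ?_ ?_ hM
    · rintro _ ⟨S, hS, rfl⟩
      rw [lam_eB b T S, if_neg]
      rintro rfl; exact hT hS
    · simp
    · intro x y _ _ hx hy; rw [map_add, hx, hy, add_zero]
    · intro a x _ hx; rw [map_smul, hx, smul_zero]
  · intro h
    rw [expand b M]
    refine Submodule.sum_mem _ fun T _ => ?_
    by_cases hT : (↑T : Set (Fin n)) ⊆ s
    · exact Submodule.smul_mem _ _ (eB_mem_P b s hT)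
    · rw [h T hT, zero_smul]; exact Submodule.zero_mem _

lemma mem_adjoin_iff_mem_P (M : ExteriorAlgebra ℝ X) :
    M ∈ Algebra.adjoin ℝ (⇑(ι ℝ (M := X)) ''
      ((Submodule.span ℝ (b '' s) : Submodule ℝ X) : Set X)) ↔ M ∈ P b s := by
  constructor
  · intro hM
    refine Algebra.adjoin_induction ?_ ?_ ?_ ?_ hM
    · rintro _ ⟨w, hw, rfl⟩
      have hsupp : ↑(b.repr w).support ⊆ s := b.mem_span_image.mp hw
      rw [← b.sum_repr w, map_sum]
      refine Submodule.sum_mem _ fun i _ => ?_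
      rw [map_smul]
      by_cases hi : i ∈ s
      · rw [← eB_singleton b i]
        exact Submodule.smul_mem _ _ (eB_mem_P b s (by simp [hi]))
      · have : b.repr w i = 0 := by
          by_contra hne
          exact hi (hsupp (Finsupp.mem_support_iff.mpr hne))
        rw [this, zero_smul]
        exact Submodule.zero_mem _
    · intro r
      rw [Algebra.algebraMap_eq_smul_one, ← eB_empty b]
      exact Submodule.smul_mem _ _ (eB_mem_P b s (by simp))
    · intro x y _ _ hx hy; exact Submodule.add_mem _ hx hy
    · intro x y _ _ hx hy; exact P_mul b s hx hy
  · intro hM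
    refine Submodule.span_induction ?_ ?_ ?_ ?_ hM
    · rintro _ ⟨T, hT, rfl⟩
      rw [eB]
      refine Subalgebra.list_prod_mem _ fun x hx => ?_
      rcases List.mem_map.mp hx with ⟨i, hi, rfl⟩
      exact Algebra.subset_adjoin ⟨b i, Submodule.subset_span ⟨i, hT ((Finset.mem_sort _).mp hi), rfl⟩, rfl⟩
    · exact Subalgebra.zero_mem _
    · intro x y _ _ hx hy; exact Subalgebra.add_mem _ hx hy
    · intro a x _ hx; exact Subalgebra.smul_mem _ hx a

end Span
section KeyComp
variable (s : Set (Fin n))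

lemma lam_insert_ι_mul_eB_ne {j i : Fin n} {T₀ T : Finset (Fin n)}
    (hcase : i ∈ T ∨ insert j T₀ ≠ insert i T) :
    lam b (insert j T₀) (ι ℝ (b i) * eB b T) = 0 := by
  by_cases hiT : i ∈ T
  · rw [ι_mul_eB_of_mem b hiT, map_zero]
  · obtain ⟨ε, _, hmul⟩ := ι_mul_eB b hiT
    rw [hmul, map_smul, lam_eB, if_neg, smul_zero]
    intro e
    rcases hcase with h | h
    · exact hiT h
    · exact h e.symm

lemma lam_insert_ι_mul_eB_self {j : Fin n} {T₀ : Finset (Fin n)} (hj : j ∉ T₀) :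
    ∃ ε : ℝ, ε ≠ 0 ∧ lam b (insert j T₀) (ι ℝ (b j) * eB b T₀) = ε := by
  obtain ⟨ε, hε, hmul⟩ := ι_mul_eB b hj
  exact ⟨ε, hε, by rw [hmul, map_smul, lam_eB, if_pos rfl, smul_eq_mul, mul_one]⟩

/-- if `v ∧ M = 0` and `M` is a nonzero element of the subalgebra generated by the
vectors `b i`, `i ∈ s`, then `v` lies in the span of those vectors. -/
lemma vec_mem_span_of_ι_mul_eq_zero {M : ExteriorAlgebra ℝ X} (hM : M ≠ 0)
    (hMP : M ∈ P b s) {v : X} (hv : ι ℝ v * M = 0) :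
    v ∈ Submodule.span ℝ (b '' s) := by
  set m : Finset (Fin n) → ℝ := fun T => lam b T M with hm
  have hMex : M = ∑ T : Finset (Fin n), m T • eB b T := expand b M
  have hsupp : ∀ T : Finset (Fin n), ¬(↑T ⊆ s) → m T = 0 := (mem_P_iff_lam b s M).mp hMP
  have hex : ∃ T₀, m T₀ ≠ 0 := by
    by_contra hc
    push_neg at hc
    apply hM
    rw [hMex]
    exact Finset.sum_eq_zero fun T _ => by rw [hc T, zero_smul]
  obtain ⟨T₀, hT₀⟩ := hex
  have hT₀s : ↑T₀ ⊆ s := by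
    by_contra hc; exact hT₀ (hsupp T₀ hc)
  rw [b.mem_span_image]
  intro j hj
  by_contra hjs
  have hjT₀ : j ∉ T₀ := fun h => hjs (hT₀s h)
  have hvM : ι ℝ v * M = ∑ i : Fin n, ∑ T : Finset (Fin n),
      (b.repr v i * m T) • (ι ℝ (b i) * eB b T) := by
    conv_lhs => rw [← b.sum_repr v, hMex]
    rw [map_sum, Finset.sum_mul]
    refine Finset.sum_congr rfl fun i _ => ?_
    rw [Finset.mul_sum]
    refine Finset.sum_congr rfl fun T _ => ?_
    rw [map_smul, smul_mul_assoc, mul_smul_comm, smul_smul]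
  have hlamv : lam b (insert j T₀) (ι ℝ v * M) =
      (b.repr v j * m T₀) * lam b (insert j T₀) (ι ℝ (b j) * eB b T₀) := by
    rw [hvM, map_sum]
    rw [Finset.sum_congr rfl fun i _ => map_sum (lam b (insert j T₀)) _ _]
    have hz : ∀ i : Fin n, ∀ T : Finset (Fin n), ¬(i = j ∧ T = T₀) →
        lam b (insert j T₀) ((b.repr v i * m T) • (ι ℝ (b i) * eB b T)) = 0 := by
      intro i T hne
      by_cases hTs : (↑T : Set (Fin n)) ⊆ s
      · rw [map_smul, smul_eq_mul]
        rw [lam_insert_ι_mul_eB_ne b, mul_zero]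
        by_cases hiT : i ∈ T
        · exact Or.inl hiT
        · refine Or.inr fun e => ?_
          have hjmem : j ∈ insert i T := by rw [← e]; exact Finset.mem_insert_self _ _
          rcases Finset.mem_insert.mp hjmem with h | h
          · subst h
            have : T = T₀ := by
              have := congrArg (fun (U : Finset (Fin n)) => U.erase j) e
              simpa [Finset.erase_insert hjT₀, Finset.erase_insert hiT] using this.symm
            exact hne ⟨rfl, this⟩
          · exact hjs (hTs h)
      · rw [hsupp T hTs, mul_zero, zero_smul, map_zero]
    rw [Finset.sum_eq_single j]
    · rw [Finset.sum_eq_single T₀]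
      · rw [map_smul, smul_eq_mul]
      · intro T _ hT
        exact hz j T fun ⟨_, e⟩ => hT e
      · intro h; exact absurd (Finset.mem_univ T₀) h
    · intro i _ hi
      exact Finset.sum_eq_zero fun T _ => hz i T fun ⟨e, _⟩ => hi e
    · intro h; exact absurd (Finset.mem_univ j) h
  obtain ⟨ε, hε, hεeq⟩ := lam_insert_ι_mul_eB_self b hjT₀
  rw [hv, map_zero, hεeq] at hlamv
  have : b.repr v j = 0 := by
    rcases mul_eq_zero.mp hlamv.symm with h | h
    · rcases mul_eq_zero.mp h with h' | h'
      · exact h'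
      · exact absurd h' hT₀
    · exact absurd h hε
  exact (Finsupp.mem_support_iff.mp hj) this

/-- if `b i ∧ M = 0` and `i ∉ T` then the `T`-coordinate of `M` vanishes. -/
lemma lam_eq_zero_of_ι_mul_eq_zero {M : ExteriorAlgebra ℝ X} {i : Fin n} {T : Finset (Fin n)}
    (hiT : i ∉ T) (hzero : ι ℝ (b i) * M = 0) : lam b T M = 0 := by
  set m : Finset (Fin n) → ℝ := fun T => lam b T M with hm
  have hMex : M = ∑ T' : Finset (Fin n), m T' • eB b T' := expand b M
  have hmul : ι ℝ (b i) * M = ∑ T' : Finset (Fin n), m T' • (ι ℝ (b i) * eB b T') := by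
    conv_lhs => rw [hMex]
    rw [Finset.mul_sum]
    exact Finset.sum_congr rfl fun T' _ => (mul_smul_comm _ _ _)
  have hlam : lam b (insert i T) (ι ℝ (b i) * M) =
      m T * lam b (insert i T) (ι ℝ (b i) * eB b T) := by
    rw [hmul, map_sum]
    rw [Finset.sum_eq_single T]
    · rw [map_smul, smul_eq_mul]
    · intro T' _ hT'
      rw [map_smul, smul_eq_mul, lam_insert_ι_mul_eB_ne b, mul_zero]
      by_cases hiT' : i ∈ T'
      · exact Or.inl hiT'
      · refine Or.inr fun e => ?_
        have : T' = T := by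
          have := congrArg (fun (U : Finset (Fin n)) => U.erase i) e
          simpa [Finset.erase_insert hiT, Finset.erase_insert hiT'] using this.symm
        exact hT' this
    · intro h; exact absurd (Finset.mem_univ T) h
  obtain ⟨ε, hε, hεeq⟩ := lam_insert_ι_mul_eB_self b hiT
  rw [hzero, map_zero, hεeq] at hlam
  rcases mul_eq_zero.mp hlam.symm with h | h
  · exact h
  · exact absurd h hε

end KeyComp

section Contraction

/-- left contraction by a covector, inherited from the Clifford algebra with zero form -/
noncomputable def ctr (f : Module.Dual ℝ X) :
    ExteriorAlgebra ℝ X →ₗ[ℝ] ExteriorAlgebra ℝ X :=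
  CliffordAlgebra.contractLeft f

lemma ctr_ι_mul (f : Module.Dual ℝ X) (x : X) (M : ExteriorAlgebra ℝ X) :
    ctr f (ι ℝ x * M) = f x • M - ι ℝ x * ctr f M :=
  CliffordAlgebra.contractLeft_ι_mul f x M

lemma ctr_one (f : Module.Dual ℝ X) : ctr f (1 : ExteriorAlgebra ℝ X) = 0 :=
  CliffordAlgebra.contractLeft_one _ _

lemma ctr_add_dual (f g : Module.Dual ℝ X) (M : ExteriorAlgebra ℝ X) :
    ctr (f + g) M = ctr f M + ctr g M := by
  rw [ctr, map_add]; rfl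

lemma ctr_eL_eq_zero (f : Module.Dual ℝ X) :
    ∀ l : List (Fin n), (∀ i ∈ l, f (b i) = 0) → ctr f (eL b l) = 0 := by
  intro l
  induction l with
  | nil => intro _; rw [eL_nil]; exact ctr_one f
  | cons a l ih =>
    intro h
    rw [eL_cons, ctr_ι_mul, h a List.mem_cons_self, zero_smul,
      ih fun i hi => h i (List.mem_cons_of_mem _ hi), mul_zero, sub_zero]

lemma ctr_coord_eL (j : Fin n) :
    ∀ l : List (Fin n), l.Nodup → j ∈ l →
      ∃ ε : ℝ, ε ≠ 0 ∧ ctr (b.coord j) (eL b l) = ε • eL b (l.erase j) := by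
  intro l
  induction l with
  | nil => intro _ h; exact absurd h List.not_mem_nil
  | cons a l ih =>
    intro hnd hj
    rw [eL_cons, ctr_ι_mul, coord_apply_basis]
    by_cases hja : j = a
    · subst hja
      have hjl : j ∉ l := (List.nodup_cons.mp hnd).1
      rw [if_pos rfl, one_smul, ctr_eL_eq_zero b _ _ (fun i hi => by
          rw [coord_apply_basis, if_neg]
          rintro rfl; exact hjl hi),
        mul_zero, sub_zero, List.erase_cons_head]
      exact ⟨1, one_ne_zero, (one_smul _ _).symm⟩
    · have hjl : j ∈ l := by
        rcases List.mem_cons.mp hj with h | h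
        · exact absurd h hja
        · exact h
      obtain ⟨ε, hε, heq⟩ := ih (List.nodup_cons.mp hnd).2 hjl
      refine ⟨-ε, neg_ne_zero.mpr hε, ?_⟩
      rw [if_neg (fun e => hja e.symm), zero_smul, heq, zero_sub, mul_smul_comm,
        ← eL_cons, ← neg_smul]
      congr 2
      rw [List.erase_cons_tail (by simpa using fun e => hja e.symm)]

lemma ctr_coord_eB {j : Fin n} {T : Finset (Fin n)} (hj : j ∈ T) :
    ∃ ε : ℝ, ε ≠ 0 ∧ ctr (b.coord j) (eB b T) = ε • eB b (T.erase j) := by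
  obtain ⟨ε, hε, heq⟩ := ctr_coord_eL b j (T.sort (· ≤ ·)) (Finset.sort_nodup T _)
    ((Finset.mem_sort _).mpr hj)
  exact ⟨ε, hε, by rw [eB, heq, eB, sort_erase_eq]⟩

lemma ctr_coord_eB_zero {j : Fin n} {T : Finset (Fin n)} (hj : j ∉ T) :
    ctr (b.coord j) (eB b T) = 0 := by
  refine ctr_eL_eq_zero b _ _ fun i hi => ?_
  rw [coord_apply_basis, if_neg]
  rintro rfl
  exact hj ((Finset.mem_sort _).mp hi)

lemma mem_P_iff_ctr (s : Set (Fin n)) (M : ExteriorAlgebra ℝ X) :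
    M ∈ P b s ↔ ∀ f : Module.Dual ℝ X,
      (∀ x ∈ Submodule.span ℝ (b '' s), f x = 0) → ctr f M = 0 := by
  constructor
  · intro hM f hf
    refine Submodule.span_induction ?_ ?_ ?_ ?_ hM
    · rintro _ ⟨T, hT, rfl⟩
      refine ctr_eL_eq_zero b _ _ fun i hi => ?_
      exact hf _ (Submodule.subset_span ⟨i, hT ((Finset.mem_sort _).mp hi), rfl⟩)
    · exact map_zero _
    · intro x y _ _ hx hy; rw [map_add, hx, hy, add_zero]
    · intro a x _ hx; rw [map_smul, hx, smul_zero]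
  · intro h
    rw [mem_P_iff_lam]
    intro T hT
    obtain ⟨j, hjT, hjs⟩ : ∃ j ∈ T, j ∉ s := by
      by_contra hc
      push_neg at hc
      exact hT hc
    have hf : ∀ x ∈ Submodule.span ℝ (b '' s), b.coord j x = 0 := by
      intro x hx
      refine Submodule.span_induction ?_ ?_ ?_ ?_ hx
      · rintro _ ⟨i, hi, rfl⟩
        rw [coord_apply_basis, if_neg]
        rintro rfl; exact hjs hi
      · exact map_zero _
      · intro u w _ _ hu hw; rw [map_add, hu, hw, add_zero]
      · intro a u _ hu; rw [map_smul, hu, smul_zero]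
    have hctr : ctr (b.coord j) M = 0 := h _ hf
    set m : Finset (Fin n) → ℝ := fun T => lam b T M with hm
    have hMex : M = ∑ T' : Finset (Fin n), m T' • eB b T' := expand b M
    obtain ⟨ε, hε, hεeq⟩ := ctr_coord_eB b hjT
    have hsum : lam b (T.erase j) (ctr (b.coord j) M) = m T * ε := by
      conv_lhs => rw [hMex]
      rw [map_sum, map_sum]
      rw [Finset.sum_eq_single T]
      · rw [map_smul, map_smul, hεeq, map_smul, lam_eB, if_pos rfl]
        simp [mul_comm]
      · intro T' _ hT'
        rw [map_smul, map_smul, smul_eq_mul]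
        by_cases hjT' : j ∈ T'
        · obtain ⟨ε', _, hεeq'⟩ := ctr_coord_eB b hjT'
          rw [hεeq', map_smul, lam_eB, if_neg, smul_zero, mul_zero]
          intro e
          apply hT'
          have := congrArg (fun (U : Finset (Fin n)) => insert j U) e
          simpa [Finset.insert_erase hjT', Finset.insert_erase hjT] using this
        · rw [ctr_coord_eB_zero b hjT', map_zero, mul_zero]
      · intro h'; exact absurd (Finset.mem_univ T) h'
    rw [hctr, map_zero] at hsum
    rcases mul_eq_zero.mp hsum.symm with h' | h'
    · exact h'
    · exact absurd h' hε

end Contraction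
section Glue
open Module
variable [FiniteDimensional ℝ X]

lemma exists_adapted (V : Submodule ℝ X) :
    ∃ (N : ℕ) (b : Basis (Fin N) ℝ X) (s : Set (Fin N)),
      V = Submodule.span ℝ (b '' s) := by
  obtain ⟨W, hW⟩ := Submodule.exists_isCompl V
  let bV := Module.finBasis ℝ V
  let bW := Module.finBasis ℝ W
  let b0 := (bV.prod bW).map (Submodule.prodEquivOfIsCompl V W hW)
  refine ⟨_, b0.reindex finSumFinEquiv, Set.range (⇑finSumFinEquiv ∘ Sum.inl), ?_⟩
  have himg : (b0.reindex finSumFinEquiv) '' (Set.range (⇑finSumFinEquiv ∘ Sum.inl))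
      = Set.range fun j => (↑(bV j) : X) := by
    rw [← Set.range_comp]
    apply congrArg
    funext j
    show b0.reindex finSumFinEquiv (finSumFinEquiv (Sum.inl j)) = ↑(bV j)
    rw [Basis.reindex_apply, Equiv.symm_apply_apply, Basis.map_apply]
    have hb : (bV.prod bW) (Sum.inl j) = (bV j, 0) :=
      Prod.ext (bV.prod_apply_inl_fst bW j) (bV.prod_apply_inl_snd bW j)
    rw [hb, Submodule.coe_prodEquivOfIsCompl']
    simp
  rw [himg]
  have h2 : Set.range (fun j => (↑(bV j) : X)) = (V.subtype) '' (Set.range bV) := by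
    rw [← Set.range_comp]; rfl
  rw [h2, ← Submodule.map_span, Basis.span_eq, Submodule.map_top, Submodule.range_subtype]

lemma vec_mem_of_adjoin {W : Submodule ℝ X} {M : ExteriorAlgebra ℝ X} (hM : M ≠ 0)
    (hadj : M ∈ Algebra.adjoin ℝ (⇑(ι ℝ (M := X)) '' (W : Set X)))
    {v : X} (hv : ι ℝ v * M = 0) : v ∈ W := by
  obtain ⟨N, b, s, hWs⟩ := exists_adapted W
  have hP : M ∈ P b s := (mem_adjoin_iff_mem_P b s M).mp (by rw [← hWs]; exact hadj)
  rw [hWs]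
  exact vec_mem_span_of_ι_mul_eq_zero b s hM hP hv

lemma ctr_eq_zero_of_adjoin {W : Submodule ℝ X} {M : ExteriorAlgebra ℝ X}
    (hadj : M ∈ Algebra.adjoin ℝ (⇑(ι ℝ (M := X)) '' (W : Set X)))
    {f : Module.Dual ℝ X} (hf : ∀ x ∈ W, f x = 0) : ctr f M = 0 := by
  obtain ⟨N, b, s, hWs⟩ := exists_adapted W
  have hP : M ∈ P b s := (mem_adjoin_iff_mem_P b s M).mp (by rw [← hWs]; exact hadj)
  exact (mem_P_iff_ctr b s M).mp hP f (by rw [← hWs]; exact hf)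

lemma adjoin_inf {V₁ V₂ : Submodule ℝ X} {M : ExteriorAlgebra ℝ X}
    (h₁ : M ∈ Algebra.adjoin ℝ (⇑(ι ℝ (M := X)) '' (V₁ : Set X)))
    (h₂ : M ∈ Algebra.adjoin ℝ (⇑(ι ℝ (M := X)) '' (V₂ : Set X))) :
    M ∈ Algebra.adjoin ℝ (⇑(ι ℝ (M := X)) '' ((V₁ ⊓ V₂ : Submodule ℝ X) : Set X)) := by
  obtain ⟨N, b, s, hWs⟩ := exists_adapted (V₁ ⊓ V₂)
  rw [hWs]
  refine (mem_adjoin_iff_mem_P b s M).mpr ((mem_P_iff_ctr b s M).mpr fun f hf => ?_)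
  have hfann : f ∈ Submodule.dualAnnihilator (V₁ ⊓ V₂) :=
    Submodule.mem_dualAnnihilator f |>.mpr (by rw [hWs]; exact hf)
  rw [Subspace.dualAnnihilator_inf_eq] at hfann
  obtain ⟨f₁, hf₁, f₂, hf₂, rfl⟩ := Submodule.mem_sup.mp hfann
  rw [ctr_add_dual,
    ctr_eq_zero_of_adjoin h₁ ((Submodule.mem_dualAnnihilator f₁).mp hf₁),
    ctr_eq_zero_of_adjoin h₂ ((Submodule.mem_dualAnnihilator f₂).mp hf₂), add_zero]

lemma top_mem_adjoin (M : ExteriorAlgebra ℝ X) :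
    M ∈ Algebra.adjoin ℝ (⇑(ι ℝ (M := X)) '' ((⊤ : Submodule ℝ X) : Set X)) := by
  let b := Module.finBasis ℝ X
  have htop : (⊤ : Submodule ℝ X) = Submodule.span ℝ (b '' Set.univ) := by
    rw [Set.image_univ, Basis.span_eq]
  rw [htop]
  exact (mem_adjoin_iff_mem_P b Set.univ M).mpr (by rw [P_univ_eq_top]; trivial)

lemma listBlade (L : List X) :
    (List.ofFn fun i => ι ℝ (L.get i)).prod = (L.map (ι ℝ)).prod := by
  conv_rhs => rw [← List.ofFn_get L, List.map_ofFn]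
  rfl

lemma smul_eB_isBlade {N : ℕ} (b : Basis (Fin N) ℝ X) (m : ℝ) (T : Finset (Fin N)) :
    IsBlade (m • eB b T) := by
  rcases hl : T.sort (· ≤ ·) with _ | ⟨a, t⟩
  · left
    refine ⟨m, ?_⟩
    rw [eB, hl, eL_nil, Algebra.algebraMap_eq_smul_one]
  · right
    refine ⟨((m • b a) :: t.map b).length, ((m • b a) :: t.map b).get, ?_⟩
    rw [listBlade]
    rw [List.map_cons, List.prod_cons, List.map_map, map_smul, smul_mul_assoc]
    rw [eB, hl, eL_cons]
    rfl

end Glue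
end Coord
end Stmt17Aux

lemma mem_innerSpace_iff' {X : Type*} [AddCommGroup X] [Module ℝ X]
    (M : ExteriorAlgebra ℝ X) (v : X) :
    v ∈ innerSpace M ↔ ExteriorAlgebra.ι ℝ v * M = 0 := by
  rw [innerSpace, LinearMap.mem_ker, LinearMap.comp_apply, LinearMap.mulRight_apply]

/-- a nonzero multivector is a blade iff its inner and outer spaces agree. -/
theorem stmt17 {X : Type*} [NormedAddCommGroup X] [InnerProductSpace ℝ X]
    [FiniteDimensional ℝ X]
    (M : ExteriorAlgebra ℝ X) (hM : M ≠ 0) :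
    IsBlade M ↔ innerSpace M = outerSpace M := by
  classical
  set S : Set (Submodule ℝ X) :=
    {V : Submodule ℝ X |
      M ∈ Algebra.adjoin ℝ (⇑(ExteriorAlgebra.ι ℝ (M := X)) '' (V : Set X))} with hSdef
  have hosp : outerSpace M = sInf S := rfl
  have hispS : ∀ W ∈ S, innerSpace M ≤ W := fun W hW v hv =>
    Stmt17Aux.vec_mem_of_adjoin hM hW ((mem_innerSpace_iff' M v).mp hv)
  constructor
  · rintro (⟨r, rfl⟩ | ⟨k, v, rfl⟩)
    · have hbot : (⊥ : Submodule ℝ X) ∈ S := by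
        rw [hSdef]
        simp only [Set.mem_setOf_eq]
        exact Subalgebra.algebraMap_mem _ r
      apply le_antisymm
      · rw [hosp]; exact le_sInf hispS
      · rw [hosp]; exact le_trans (sInf_le hbot) bot_le
    · set V : Submodule ℝ X := Submodule.span ℝ (Set.range v) with hV
      have hVmem : V ∈ S := by
        rw [hSdef]
        simp only [Set.mem_setOf_eq]
        refine Subalgebra.list_prod_mem _ fun x hx => ?_
        obtain ⟨i, rfl⟩ := Set.mem_range.mp (List.mem_ofFn.mp hx)
        exact Algebra.subset_adjoin
          ⟨v i, Submodule.subset_span (Set.mem_range_self i), rfl⟩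
      have hVisp : V ≤ innerSpace ((List.ofFn fun i => ExteriorAlgebra.ι ℝ (v i)).prod) := by
        rw [hV, Submodule.span_le]
        rintro x ⟨i, rfl⟩
        rw [SetLike.mem_coe, mem_innerSpace_iff']
        exact ExteriorAlgebra.ι_mul_prod_list v i
      apply le_antisymm
      · rw [hosp]; exact le_sInf hispS
      · rw [hosp]; exact le_trans (sInf_le hVmem) hVisp
  · intro h
    have htop : (⊤ : Submodule ℝ X) ∈ S := Stmt17Aux.top_mem_adjoin M
    have hne : {k : ℕ | ∃ V ∈ S, Module.finrank ℝ ↥V = k}.Nonempty := ⟨_, ⊤, htop, rfl⟩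
    obtain ⟨V₀, hV₀S, hV₀rk⟩ := Nat.sInf_mem hne
    have hmin : ∀ W ∈ S, V₀ ≤ W := by
      intro W hW
      have hinfS : V₀ ⊓ W ∈ S := Stmt17Aux.adjoin_inf hV₀S hW
      have h1 : Module.finrank ℝ ↥V₀ ≤ Module.finrank ℝ ↥(V₀ ⊓ W) := by
        rw [hV₀rk]; exact Nat.sInf_le ⟨V₀ ⊓ W, hinfS, rfl⟩
      exact inf_eq_left.mp (Submodule.eq_of_le_of_finrank_le inf_le_left h1)
    have hosp0 : outerSpace M = V₀ := by
      rw [hosp]; exact le_antisymm (sInf_le hV₀S) (le_sInf hmin)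
    obtain ⟨N, b, s, hVs⟩ := Stmt17Aux.exists_adapted V₀
    have hP : M ∈ Stmt17Aux.P b s :=
      (Stmt17Aux.mem_adjoin_iff_mem_P b s M).mp (by rw [← hVs]; exact hV₀S)
    have hkill : ∀ i ∈ s, ExteriorAlgebra.ι ℝ (b i) * M = 0 := by
      intro i hi
      have hbi : b i ∈ innerSpace M := by
        rw [h, hosp0, hVs]
        exact Submodule.subset_span ⟨i, hi, rfl⟩
      exact (mem_innerSpace_iff' M _).mp hbi
    set sF := (Set.toFinite s).toFinset with hsF
    have hzero : ∀ T : Finset (Fin N), T ≠ sF → Stmt17Aux.lam b T M = 0 := by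
      intro T hT
      by_cases hTs : (↑T : Set (Fin N)) ⊆ s
      · have hsub : T ⊆ sF := fun x hx => (Set.Finite.mem_toFinset _).mpr (hTs hx)
        obtain ⟨i, hisF, hiT⟩ := Finset.exists_of_ssubset (lt_of_le_of_ne hsub hT)
        exact Stmt17Aux.lam_eq_zero_of_ι_mul_eq_zero b hiT
          (hkill i ((Set.Finite.mem_toFinset _).mp hisF))
      · exact (Stmt17Aux.mem_P_iff_lam b s M).mp hP T hTs
    have hsingle : (∑ T : Finset (Fin N), Stmt17Aux.lam b T M • Stmt17Aux.eB b T)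
        = Stmt17Aux.lam b sF M • Stmt17Aux.eB b sF :=
      Finset.sum_eq_single sF (fun T _ hT => by rw [hzero T hT, zero_smul])
        (fun h' => absurd (Finset.mem_univ sF) h')
    have hMeq : M = Stmt17Aux.lam b sF M • Stmt17Aux.eB b sF :=
      (Stmt17Aux.expand b M).trans hsingle
    rw [hMeq]
    exact Stmt17Aux.smul_eB_isBlade b _ sF
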